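/- Let F be a variable convex CNF formula and let σ be an ordering of var(F) witnessing left convexity of the incidence graph of F. Then for every prefix π of σ, the number of var(π)-subterms of F is at most 2(size(F)+1). In particular, the subterm width of F with respect to σ is at most 2(size(F)+1). -/

import Mathlib

abbrev Var := ℕ
abbrev Lit := Var × Bool
abbrev Clause := Finset Lit
abbrev CNF := Finset Clause

def varsClause (c : Clause) : Finset Var := c.image Prod.fst
def varsCNF (F : CNF) : Finset Var := F.sup varsClause
def sizeCNF (F : CNF) : ℕ := ∑ c ∈ F, c.card

def satClauseOn (X : Finset Var) (f : Var → Bool) (c : Clause) : Prop :=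
  ∃ l ∈ c, l.1 ∈ X ∧ f l.1 = l.2

instance (X : Finset Var) (f : Var → Bool) : DecidablePred (satClauseOn X f) := fun c => by
  unfold satClauseOn; infer_instance

def restrict (F : CNF) (X : Finset Var) (f : Var → Bool) : CNF :=
  (F.filter (fun c => ¬ satClauseOn X f c)).image (fun c => c.filter (fun l => l.1 ∉ X))

def st (F : CNF) (X : Finset Var) : Set CNF := { G | ∃ f : Var → Bool, G = restrict F X f }

noncomputable def stw (F : CNF) (σ : List Var) : ℕ :=
  (Finset.Icc 1 σ.length).sup fun i => (st F ((σ.take i).toFinset)).ncard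

def satCNF (F : CNF) (f : Var → Bool) : Prop := ∀ c ∈ F, ∃ l ∈ c, f l.1 = l.2

structure OBDD (σ : List Var) where
  size : ℕ
  label : Fin size → (Fin σ.length) ⊕ Bool
  succ : Fin size → Bool → Fin size
  source : Fin size
  ordered : ∀ v i, label v = Sum.inl i → ∀ b j, label (succ v b) = Sum.inl j → i < j

def OBDD.evalAux {σ : List Var} (D : OBDD σ) (f : Var → Bool) : ℕ → Fin D.size → Bool
  | 0, v => match D.label v with | .inr b => b | .inl _ => false
  | n+1, v => match D.label v with
    | .inr b => b
    | .inl i => D.evalAux f n (D.succ v (f (σ.get i)))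

def OBDD.eval {σ : List Var} (D : OBDD σ) (f : Var → Bool) : Bool :=
  D.evalAux f (σ.length + 1) D.source

def OBDD.computes {σ : List Var} (D : OBDD σ) (F : CNF) : Prop :=
  ∀ f : Var → Bool, D.eval f = true ↔ satCNF F f

/-- σ witnesses left convexity of the incidence graph of F (variable convexity). -/
def ConvexWitness (F : CNF) (σ : List Var) : Prop :=
  ∀ c ∈ F, ∀ v ∈ varsClause c, ∀ v' ∈ varsClause c, ∀ v'' ∈ σ.toFinset,
    σ.idxOf v < σ.idxOf v'' → σ.idxOf v'' < σ.idxOf v' → v'' ∈ varsClause c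

open Finset in
lemma core_bound (F : CNF) (σ : List Var) (hnd : σ.Nodup) (hv : σ.toFinset = varsCNF F)
    (hconv : ConvexWitness F σ) (i : ℕ) :
    (st F ((σ.take i).toFinset)).ncard ≤ 2 * (sizeCNF F + 1) := by
  classical
  set X : Finset Var := (σ.take i).toFinset with hXdef
  -- membership characterization of X
  have memX : ∀ v : Var, v ∈ X ↔ (v ∈ σ ∧ σ.idxOf v < i) := by
    intro v
    simp only [hXdef, List.mem_toFinset]
    constructor
    · intro hvt
      have hvσ : v ∈ σ := List.take_subset i σ hvt
      refine ⟨hvσ, ?_⟩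
      obtain ⟨j, hj, hje⟩ := List.mem_iff_getElem.mp hvt
      have hj' : j < σ.length := lt_of_lt_of_le hj (by simp [List.length_take])
      have : (σ.take i)[j] = σ[j] := List.getElem_take
      rw [this] at hje
      have : σ.idxOf v = j := by rw [← hje]; exact hnd.idxOf_getElem j hj'
      rw [this]
      have := hj
      simp only [List.length_take, lt_min_iff] at this
      exact this.1
    · rintro ⟨hvσ, hlt⟩
      have hl : σ.idxOf v < σ.length := List.idxOf_lt_length_iff.mpr hvσ
      have hlen : σ.idxOf v < (σ.take i).length := by
        simp [List.length_take, lt_min_iff]; exact ⟨hlt, hl⟩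
      have : (σ.take i)[σ.idxOf v] = σ[σ.idxOf v] := List.getElem_take
      have hmem : (σ.take i)[σ.idxOf v] ∈ σ.take i := List.getElem_mem hlen
      rwa [this, List.getElem_idxOf hl] at hmem
  have varsub : ∀ c ∈ F, varsClause c ⊆ σ.toFinset := by
    intro c hc; rw [hv]; exact Finset.le_sup (f := varsClause) hc
  -- crossing clauses
  set cross : Clause → Prop := fun c => (varsClause c ∩ X).Nonempty ∧ ¬ varsClause c ⊆ X
    with hcrossdef
  set Cross : CNF := F.filter cross with hCross
  set tl : Clause → Clause := fun c => c.filter (fun l => l.1 ∉ X) with htl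
  -- chain lemma
  have chain : ∀ c ∈ F, ∀ c' ∈ F, cross c → cross c' →
      varsClause c ∩ X ⊆ varsClause c' ∩ X ∨ varsClause c' ∩ X ⊆ varsClause c ∩ X := by
    intro c hc c' hc' ⟨hcne, hcns⟩ ⟨hc'ne, hc'ns⟩
    by_cases hsub : varsClause c ∩ X ⊆ varsClause c' ∩ X
    · exact Or.inl hsub
    · right
      obtain ⟨v, hvA, hvB⟩ := Finset.not_subset.mp hsub
      obtain ⟨u, huc, huX⟩ := Finset.not_subset.mp hcns
      obtain ⟨u', hu'c, hu'X⟩ := Finset.not_subset.mp hc'ns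
      have hvc : v ∈ varsClause c := (Finset.mem_inter.mp hvA).1
      have hvX : v ∈ X := (Finset.mem_inter.mp hvA).2
      have hvσ : v ∈ σ := ((memX v).mp hvX).1
      have hvi : σ.idxOf v < i := ((memX v).mp hvX).2
      have huσ : u ∈ σ := by
        have := varsub c hc huc; simpa using this
      have hui : i ≤ σ.idxOf u := by
        by_contra h
        push_neg at h
        exact huX ((memX u).mpr ⟨huσ, h⟩)
      have hu'σ : u' ∈ σ := by
        have := varsub c' hc' hu'c; simpa using this
      have hu'i : i ≤ σ.idxOf u' := by
        by_contra h
        push_neg at h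
        exact hu'X ((memX u').mpr ⟨hu'σ, h⟩)
      intro w hwB
      have hwc' : w ∈ varsClause c' := (Finset.mem_inter.mp hwB).1
      have hwX : w ∈ X := (Finset.mem_inter.mp hwB).2
      have hwσ : w ∈ σ := ((memX w).mp hwX).1
      have hwi : σ.idxOf w < i := ((memX w).mp hwX).2
      rcases lt_trichotomy (σ.idxOf v) (σ.idxOf w) with hlt | heq | hgt
      · have hwc : w ∈ varsClause c :=
          hconv c hc v hvc u huc w (List.mem_toFinset.mpr hwσ) hlt (by omega)
        exact Finset.mem_inter.mpr ⟨hwc, hwX⟩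
      · have : v = w := (List.idxOf_inj hvσ).mp heq
        exact absurd (this ▸ hwB) hvB
      · have hvc' : v ∈ varsClause c' :=
          hconv c' hc' w hwc' u' hu'c v (List.mem_toFinset.mpr hvσ) hgt (by omega)
        exact absurd (Finset.mem_inter.mpr ⟨hvc', hvX⟩) hvB
  -- the reconstruction function
  set Outs : CNF := F.filter (fun c => varsClause c ∩ X = ∅) with hOuts
  set D : Clause → CNF := fun c₀ => Cross.filter
      (fun c => varsClause c ∩ X ⊆ varsClause c₀ ∩ X ∧ ∀ l ∈ c, l.1 ∈ X → l ∈ c₀) with hD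
  set h : Bool × Option Clause → CNF := fun p =>
      (Outs ∪ (p.2.elim ∅ (fun c₀ => (D c₀).image tl))) ∪ (if p.1 then {(∅ : Clause)} else ∅)
    with hh
  set T : Finset (Bool × Option Clause) :=
      Finset.univ ×ˢ insert none (Cross.image some) with hT
  have hsub : st F X ⊆ ↑(T.image h) := by
    rintro G ⟨f, rfl⟩
    rw [Finset.mem_coe, Finset.mem_image]
    set Surv : CNF := Cross.filter (fun c => ¬ satClauseOn X f c) with hSurv
    set b : Bool := decide (∃ c ∈ F, varsClause c ⊆ X ∧ ¬ satClauseOn X f c) with hb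
    -- main structural equality
    have main : restrict F X f = (Outs ∪ Surv.image tl) ∪ (if b then {(∅ : Clause)} else ∅) := by
      ext d
      simp only [_root_.restrict, Finset.mem_image, Finset.mem_filter, Finset.mem_union]
      constructor
      · rintro ⟨c, ⟨hcF, hcns⟩, rfl⟩
        by_cases h1 : varsClause c ⊆ X
        · -- falsified inside clause : contributes ∅, b is true
          have htc : c.filter (fun l => l.1 ∉ X) = (∅ : Clause) := by
            simp only [Finset.filter_eq_empty_iff]
            intro l hl
            simp only [not_not]
            exact h1 (Finset.mem_image_of_mem Prod.fst hl)
          have hbt : b = true := by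
            rw [hb, decide_eq_true_iff]
            exact ⟨c, hcF, h1, hcns⟩
          right
          rw [hbt, if_pos rfl, htc]
          exact Finset.mem_singleton_self _
        · by_cases h2 : varsClause c ∩ X = ∅
          · -- fully outside : contributes itself
            left; left
            have htc : c.filter (fun l => l.1 ∉ X) = c := by
              apply Finset.filter_true_of_mem
              intro l hl hlX
              have : l.1 ∈ varsClause c ∩ X :=
                Finset.mem_inter.mpr ⟨Finset.mem_image_of_mem Prod.fst hl, hlX⟩
              simp [h2] at this
            rw [htc]
            exact Finset.mem_filter.mpr ⟨hcF, h2⟩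
          · -- crossing
            left; right
            refine ⟨c, ?_, rfl⟩
            rw [hSurv]
            refine Finset.mem_filter.mpr ⟨?_, hcns⟩
            exact Finset.mem_filter.mpr ⟨hcF, Finset.nonempty_iff_ne_empty.mpr h2, h1⟩
      · rintro ((hd | hd) | hd)
        · -- outside clause
          rw [hOuts, Finset.mem_filter] at hd
          refine ⟨d, ⟨hd.1, ?_⟩, ?_⟩
          · rintro ⟨l, hld, hlX, _⟩
            have : l.1 ∈ varsClause d ∩ X :=
              Finset.mem_inter.mpr ⟨Finset.mem_image_of_mem Prod.fst hld, hlX⟩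
            simp [hd.2] at this
          · apply Finset.filter_true_of_mem
            intro l hl hlX
            have : l.1 ∈ varsClause d ∩ X :=
              Finset.mem_inter.mpr ⟨Finset.mem_image_of_mem Prod.fst hl, hlX⟩
            simp [hd.2] at this
        · obtain ⟨c, hcS, rfl⟩ := hd
          rw [hSurv, Finset.mem_filter] at hcS
          have hcF : c ∈ F := (Finset.mem_filter.mp hcS.1).1
          exact ⟨c, ⟨hcF, hcS.2⟩, rfl⟩
        · split_ifs at hd with hbt
          · rw [Finset.mem_singleton] at hd
            subst hd
            rw [hb, decide_eq_true_iff] at hbt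
            obtain ⟨c, hcF, hcsub, hcns⟩ := hbt
            refine ⟨c, ⟨hcF, hcns⟩, ?_⟩
            simp only [Finset.filter_eq_empty_iff]
            intro l hl
            simp only [not_not]
            exact hcsub (Finset.mem_image_of_mem Prod.fst hl)
          · simp at hd
    rcases eq_or_ne Surv ∅ with hS0 | hSne
    · refine ⟨(b, none), ?_, ?_⟩
      · rw [hT]; simp
      · rw [hh, main, hS0]
        simp
    · -- choose a maximal survivor
      obtain ⟨c₀, hc₀S, hc₀max⟩ := Finset.exists_max_image Surv
        (fun c => (varsClause c ∩ X).card) (Finset.nonempty_iff_ne_empty.mpr hSne)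
      have hc₀C : c₀ ∈ Cross := (Finset.mem_filter.mp hc₀S).1
      have hc₀ns : ¬ satClauseOn X f c₀ := (Finset.mem_filter.mp hc₀S).2
      have hc₀F : c₀ ∈ F := (Finset.mem_filter.mp hc₀C).1
      have hSD : Surv = D c₀ := by
        ext c
        constructor
        · intro hcS
          have hcC : c ∈ Cross := (Finset.mem_filter.mp hcS).1
          have hcns : ¬ satClauseOn X f c := (Finset.mem_filter.mp hcS).2
          have hcF : c ∈ F := (Finset.mem_filter.mp hcC).1
          have hsubm : varsClause c ∩ X ⊆ varsClause c₀ ∩ X := by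
            rcases chain c hcF c₀ hc₀F (Finset.mem_filter.mp hcC).2
                (Finset.mem_filter.mp hc₀C).2 with hcc | hcc
            · exact hcc
            · have := Finset.eq_of_subset_of_card_le hcc (hc₀max c hcS)
              rw [this]
          rw [hD, Finset.mem_filter]
          refine ⟨hcC, hsubm, ?_⟩
          intro l hl hlX
          have hl1 : l.1 ∈ varsClause c₀ ∩ X :=
            hsubm (Finset.mem_inter.mpr ⟨Finset.mem_image_of_mem Prod.fst hl, hlX⟩)
          obtain ⟨l', hl'c₀, hl'1⟩ := Finset.mem_image.mp (Finset.mem_inter.mp hl1).1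
          have hne1 : f l.1 ≠ l.2 := by
            intro hfe; exact hcns ⟨l, hl, hlX, hfe⟩
          have hne2 : f l'.1 ≠ l'.2 := by
            intro hfe; exact hc₀ns ⟨l', hl'c₀, hl'1 ▸ hlX, hfe⟩
          rw [hl'1] at hne2
          have : l.2 = l'.2 := by
            cases hx : f l.1 <;> rw [hx] at hne1 hne2 <;>
              simp [Bool.not_eq_true, Bool.not_eq_false] at hne1 hne2 <;> rw [hne1, hne2]
          have : l = l' := Prod.ext hl'1.symm this
          rwa [this]
        · intro hcD
          rw [hD, Finset.mem_filter] at hcD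
          obtain ⟨hcC, _, hlit⟩ := hcD
          rw [hSurv, Finset.mem_filter]
          refine ⟨hcC, ?_⟩
          rintro ⟨l, hl, hlX, hfe⟩
          exact hc₀ns ⟨l, hlit l hl hlX, hlX, hfe⟩
      refine ⟨(b, some c₀), ?_, ?_⟩
      · rw [hT]
        simp only [Finset.mem_product, Finset.mem_univ, true_and, Finset.mem_insert,
          Finset.mem_image]
        exact Or.inr ⟨c₀, hc₀C, rfl⟩
      · rw [hh, main, hSD]; rfl
  -- counting
  have h1 : (st F X).ncard ≤ (T.image h).card := by
    rw [← Set.ncard_coe_finset]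
    exact Set.ncard_le_ncard hsub (Finset.finite_toSet _)
  have h2 : (T.image h).card ≤ T.card := Finset.card_image_le
  have h3 : T.card ≤ 2 * (Cross.card + 1) := by
    rw [hT, Finset.card_product, Finset.card_univ, Fintype.card_bool]
    have hx : (insert none (Cross.image some)).card ≤ (Cross.image some).card + 1 :=
      Finset.card_insert_le _ _
    have hy : (Cross.image some).card ≤ Cross.card := Finset.card_image_le
    omega
  have h4 : Cross.card ≤ sizeCNF F := by
    have e1 : Cross.card = ∑ c ∈ Cross, 1 := by simp
    have e2 : ∑ c ∈ Cross, 1 ≤ ∑ c ∈ Cross, c.card := by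
      apply Finset.sum_le_sum
      intro c hc
      have hne : (varsClause c ∩ X).Nonempty := (Finset.mem_filter.mp hc).2.1
      have hcne : c.Nonempty := by
        obtain ⟨v, hv'⟩ := hne
        obtain ⟨l, hl, _⟩ := Finset.mem_image.mp (Finset.mem_inter.mp hv').1
        exact ⟨l, hl⟩
      exact Finset.card_pos.mpr hcne
    have e3 : ∑ c ∈ Cross, c.card ≤ ∑ c ∈ F, c.card :=
      Finset.sum_le_sum_of_subset (Finset.filter_subset _ _)
    rw [sizeCNF]; omega
  omega

/-- for a variable convex CNF with convexity ordering σ, every prefix π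
has at most 2(size(F)+1) many var(π)-subterms, hence stw(F,σ) ≤ 2(size(F)+1). -/
theorem convex_few_subterms (F : CNF) (σ : List Var)
    (hnd : σ.Nodup) (hv : σ.toFinset = varsCNF F) (hconv : ConvexWitness F σ) :
    (∀ i ≤ σ.length, (st F ((σ.take i).toFinset)).ncard ≤ 2 * (sizeCNF F + 1)) ∧
      stw F σ ≤ 2 * (sizeCNF F + 1) := by
  refine ⟨fun i _ => core_bound F σ hnd hv hconv i, ?_⟩
  exact Finset.sup_le fun i _ => core_bound F σ hnd hv hconv i
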